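/- Let Φ be a crystallographic root system with Hessenberg set 𝔥 ⊆ Φ⁺, and suppose v covers w in Bruhat order. Then |N_v| − |Φ⁺ \ 𝔥| ≤ |N_v^𝔥| ≤ |N_w^𝔥| + 1. -/

import Mathlib

open scoped RealInnerProductSpace Pointwise

noncomputable section

/-- Euclidean `n`-space, the ambient space of the root system. -/
abbrev EV (n : ℕ) := EuclideanSpace ℝ (Fin n)

/-- The (orthogonal) reflection in the hyperplane orthogonal to `α`. -/
def sRefl {n : ℕ} (α : EV n) : EV n ≃ₗᵢ[ℝ] EV n :=
  Submodule.reflection ((ℝ ∙ α)ᗮ)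

/-- A finite crystallographic root system in `ℝⁿ`, together with a choice of
positive roots and a base of simple roots. -/
structure BasedRootSystem (n : ℕ) where
  /-- the set of roots -/
  Φ : Set (EV n)
  /-- the positive roots -/
  pos : Set (EV n)
  /-- the base of simple roots -/
  Δ : Set (EV n)
  finite : Φ.Finite
  nonzero : ∀ α ∈ Φ, α ≠ 0
  reduced : ∀ α ∈ Φ, ∀ c : ℝ, c • α ∈ Φ → c = 1 ∨ c = -1
  reflect_mem : ∀ α ∈ Φ, ∀ β ∈ Φ, sRefl α β ∈ Φ
  cartan_int : ∀ α ∈ Φ, ∀ β ∈ Φ, ∃ m : ℤ, (m : ℝ) = 2 * ⟪α, β⟫ / ⟪α, α⟫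
  pos_sub : pos ⊆ Φ
  pos_union : Φ = pos ∪ (-pos)
  pos_disj : pos ∩ (-pos) = ∅
  Δ_sub : Δ ⊆ pos
  Δ_indep : LinearIndependent ℝ ((↑) : Δ → EV n)
  Δ_span : Submodule.span ℝ Δ = ⊤
  pos_combo : ∀ α ∈ pos, α ∈ AddSubmonoid.closure Δ

namespace BasedRootSystem

variable {n : ℕ} (R : BasedRootSystem n)

/-- The root order: `α ≺ β` iff `β - α` is a nonempty sum of positive roots. -/
def prec (a b : EV n) : Prop :=
  a ≠ b ∧ b - a ∈ AddSubmonoid.closure R.pos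

/-- An ideal of the positive roots: upward closed for the root order. -/
def IsIdeal (I : Set (EV n)) : Prop :=
  I ⊆ R.pos ∧ ∀ β ∈ I, ∀ α ∈ R.pos, R.prec β α → α ∈ I

/-- A Hessenberg set: the complement in `Φ⁺` of an ideal. -/
def IsHess (h : Set (EV n)) : Prop :=
  h ⊆ R.pos ∧ R.IsIdeal (R.pos \ h)

/-- The Weyl group, generated by the reflections in the roots. -/
def Weyl : Subgroup (EV n ≃ₗᵢ[ℝ] EV n) :=
  Subgroup.closure {g | ∃ α ∈ R.Φ, g = sRefl α}

/-- Application of a Weyl group element to a vector. -/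
def ap (w : R.Weyl) (x : EV n) : EV n := (w : EV n ≃ₗᵢ[ℝ] EV n) x

/-- The inversion set `N_w = {α ∈ Φ⁺ : w⁻¹ α ∈ Φ⁻}`. -/
def N (w : R.Weyl) : Set (EV n) := {α | α ∈ R.pos ∧ R.ap w⁻¹ α ∈ -R.pos}

/-- The length of a Weyl group element, `ℓ(w) = |N_w|`. -/
def len (w : R.Weyl) : ℕ := (R.N w).ncard

/-- The `𝔥`-inversion set `N_w^𝔥 = {α ∈ Φ⁺ : w⁻¹ α ∈ -𝔥}`. -/
def Nh (h : Set (EV n)) (w : R.Weyl) : Set (EV n) :=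
  {α | α ∈ R.pos ∧ R.ap w⁻¹ α ∈ -h}

/-- `ℓ_𝔥(w) = |N_w^𝔥|`, the number of Hessenberg edges ending at `w`. -/
def lenh (h : Set (EV n)) (w : R.Weyl) : ℕ := (R.Nh h w).ncard

/-- `v` covers `w` in Bruhat order: `v = s_α w` with `ℓ(v) = ℓ(w) + 1`. -/
def Covers (v w : R.Weyl) : Prop :=
  ∃ α ∈ R.pos, (v : EV n ≃ₗᵢ[ℝ] EV n) = sRefl α * (w : EV n ≃ₗᵢ[ℝ] EV n) ∧
    R.len v = R.len w + 1

/-- Bruhat order: the transitive closure of the relations `w < s_α w`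
whenever the length increases. -/
def bruhatLt (w v : R.Weyl) : Prop :=
  Relation.TransGen (fun u u' : R.Weyl =>
    ∃ α ∈ R.pos, (u' : EV n ≃ₗᵢ[ℝ] EV n) = sRefl α * (u : EV n ≃ₗᵢ[ℝ] EV n) ∧
      R.len u < R.len u') w v

/-- The edge relation of the Hessenberg graph `Γ_𝔥`: `u → w` when `w = s_α u`
with `α ∈ Φ⁺` and `w⁻¹ α ∈ -𝔥`. -/
def Edge (h : Set (EV n)) (u w : R.Weyl) : Prop :=
  ∃ α ∈ R.pos, (w : EV n ≃ₗᵢ[ℝ] EV n) = sRefl α * (u : EV n ≃ₗᵢ[ℝ] EV n) ∧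
    R.ap w⁻¹ α ∈ -h

/-- The flow-up (reachability) order of the Hessenberg graph. -/
def flowLe (h : Set (EV n)) (x y : R.Weyl) : Prop :=
  Relation.ReflTransGen (R.Edge h) x y

/-- The strict flow-up order. -/
def flowLt (h : Set (EV n)) (x y : R.Weyl) : Prop :=
  Relation.TransGen (R.Edge h) x y

/-- The linear polynomial in `ℝ[Δ] = ℝ[x₁,…,xₙ]` corresponding to a vector. -/
def lin (α : EV n) : MvPolynomial (Fin n) ℝ :=
  ∑ i, MvPolynomial.C (α i) * MvPolynomial.X i

/-- The action of an isometry `w` on the polynomial ring, induced by the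
linear action on the ambient space: it sends `lin α` to `lin (w α)`. -/
def polyAct (w : EV n ≃ₗᵢ[ℝ] EV n) :
    MvPolynomial (Fin n) ℝ →ₐ[ℝ] MvPolynomial (Fin n) ℝ :=
  MvPolynomial.aeval fun i => lin (w (EuclideanSpace.single i 1))

/-- The dot action of the Weyl group on `Maps(W, ℝ[Δ])`:
`(w · P)(u) = w (P (w⁻¹ u))`. -/
def dot (w : R.Weyl) (P : R.Weyl → MvPolynomial (Fin n) ℝ) :
    R.Weyl → MvPolynomial (Fin n) ℝ :=
  fun u => polyAct (w : EV n ≃ₗᵢ[ℝ] EV n) (P (w⁻¹ * u))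

/-- Membership in the GKM ring `H_T^*(𝔥)`: the GKM conditions
`P(w) - P(s_α w) ∈ ⟨α⟩` along all edges of `Γ_𝔥`. -/
def GKM (h : Set (EV n)) (P : R.Weyl → MvPolynomial (Fin n) ℝ) : Prop :=
  ∀ u w : R.Weyl, ∀ α ∈ R.pos,
    (w : EV n ≃ₗᵢ[ℝ] EV n) = sRefl α * (u : EV n ≃ₗᵢ[ℝ] EV n) →
    R.ap w⁻¹ α ∈ -h → P w - P u ∈ Ideal.span {lin α}

/-- The product `∏_{α ∈ S} α` (over `S ∩ Φ`) as an element of `ℝ[Δ]`. -/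
def prodRoots (S : Set (EV n)) : MvPolynomial (Fin n) ℝ :=
  ∏ α ∈ (R.finite.inter_of_right S).toFinset, lin α

/-- A flow-up class at `x`: homogeneous of degree `ℓ_𝔥(x)`, with
`P(x) = ∏_{α ∈ N_x^𝔥} α`, supported on the flow-up of `x`, and satisfying the
GKM conditions. -/
def IsFlowUp (h : Set (EV n)) (x : R.Weyl)
    (P : R.Weyl → MvPolynomial (Fin n) ℝ) : Prop :=
  R.GKM h P ∧ (∀ y, (P y).IsHomogeneous (R.lenh h x)) ∧
    P x = R.prodRoots (R.Nh h x) ∧ ∀ y, P y ≠ 0 → R.flowLe h x y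

/-- Irreducibility: the roots admit no splitting into two nonempty mutually
orthogonal parts. -/
def IsIrreducible : Prop :=
  ∀ Ψ Ψ' : Set (EV n), Ψ ∪ Ψ' = R.Φ → (∀ a ∈ Ψ, ∀ b ∈ Ψ', ⟪a, b⟫ = 0) →
    Ψ = ∅ ∨ Ψ' = ∅

/-- `γ` is the highest root: `α ⪯ γ` for every root `α`. -/
def IsHighest (γ : EV n) : Prop :=
  γ ∈ R.pos ∧ ∀ α ∈ R.Φ, α = γ ∨ R.prec α γ

end BasedRootSystem
section Aux
open BasedRootSystem

lemma sRefl_apply' {n : ℕ} (α x : EV n) :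
    sRefl α x = x - (2 * ⟪α, x⟫ / ⟪α, α⟫) • α := by
  show Submodule.reflection ((ℝ ∙ α)ᗮ) x = _
  rw [Submodule.reflection_orthogonal_apply, Submodule.reflection_singleton_apply,
    real_inner_self_eq_norm_sq]
  simp only [RCLike.ofReal_real_eq_id, id_eq, two_smul]
  module

lemma sRefl_self {n : ℕ} (α : EV n) : sRefl α α = -α :=
  Submodule.reflection_orthogonalComplement_singleton_eq_neg α

lemma sRefl_sRefl {n : ℕ} (α x : EV n) : sRefl α (sRefl α x) = x :=
  Submodule.reflection_involutive _ x

lemma sRefl_inv {n : ℕ} (α : EV n) : (sRefl α)⁻¹ = sRefl α := by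
  rw [LinearIsometryEquiv.inv_def]; exact Submodule.reflection_symm

end Aux
namespace BasedRootSystem
variable {n : ℕ} (R : BasedRootSystem n)

lemma pos_finite : R.pos.Finite := R.finite.subset R.pos_sub

lemma neg_mem_phi {a : EV n} (h : a ∈ R.Φ) : -a ∈ R.Φ := by
  rw [R.pos_union] at h ⊢
  rcases h with h | h
  · right; simpa using h
  · left; rw [Set.mem_neg] at h; simpa using h

lemma pos_or_neg {a : EV n} (h : a ∈ R.Φ) : a ∈ R.pos ∨ a ∈ -R.pos := by
  rw [R.pos_union] at h; exact h

lemma not_both {a : EV n} (h1 : a ∈ R.pos) (h2 : a ∈ -R.pos) : False := by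
  have := R.pos_disj
  rw [Set.eq_empty_iff_forall_notMem] at this
  exact this a ⟨h1, h2⟩

lemma pos_ne_zero {a : EV n} (h : a ∈ R.pos) : a ≠ 0 := R.nonzero a (R.pos_sub h)

lemma weyl_iff (g : EV n ≃ₗᵢ[ℝ] EV n) (hg : g ∈ R.Weyl) :
    ∀ b, b ∈ R.Φ ↔ g b ∈ R.Φ := by
  induction hg using Subgroup.closure_induction with
  | mem x hx =>
    obtain ⟨α, hα, rfl⟩ := hx
    intro b
    constructor
    · exact fun hb => R.reflect_mem α hα b hb
    · intro hb
      have := R.reflect_mem α hα _ hb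
      rwa [sRefl_sRefl] at this
  | one => intro b; simp
  | mul x y hx hy ihx ihy =>
    intro b
    rw [ihy b, ihx (y b)]
    simp [LinearIsometryEquiv.coe_mul]
  | inv x hx ih =>
    intro b
    have h2 := ih (x⁻¹ b)
    rw [LinearIsometryEquiv.coe_inv] at h2 ⊢
    rw [LinearIsometryEquiv.apply_symm_apply] at h2
    exact h2.symm

lemma no_neg_sum : ∀ x ∈ AddSubmonoid.closure R.pos,
    -x ∈ AddSubmonoid.closure R.pos → x = 0 := by
  classical
  have hb : ⊤ ≤ Submodule.span ℝ (Set.range ((↑) : R.Δ → EV n)) := by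
    rw [Subtype.range_coe, R.Δ_span]
  let b : Module.Basis R.Δ ℝ (EV n) := Module.Basis.mk R.Δ_indep hb
  set l : EV n →ₗ[ℝ] ℝ := b.sumCoords with hl
  have hδ : ∀ d ∈ R.Δ, l d = 1 := by
    intro d hd
    have hbd : (d : EV n) = b ⟨d, hd⟩ := by rw [Module.Basis.mk_apply]
    rw [hbd]
    exact b.sumCoords_self_apply ⟨d, hd⟩
  have key : ∀ x ∈ AddSubmonoid.closure R.Δ, 0 ≤ l x ∧ (l x = 0 → x = 0) := by
    intro x hx
    induction hx using AddSubmonoid.closure_induction with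
    | mem d hd =>
      rw [hδ d hd]
      exact ⟨zero_le_one, fun h' => absurd h' one_ne_zero⟩
    | zero => simp
    | add x y hx hy ihx ihy =>
      constructor
      · have := add_nonneg ihx.1 ihy.1
        simpa [map_add] using this
      · intro h'
        rw [map_add] at h'
        have hx0 : l x = 0 := by linarith [ihx.1, ihy.1]
        have hy0 : l y = 0 := by linarith [ihx.1, ihy.1]
        rw [ihx.2 hx0, ihy.2 hy0, add_zero]
  have hle : AddSubmonoid.closure R.pos ≤ AddSubmonoid.closure R.Δ :=
    AddSubmonoid.closure_le.mpr (fun a ha => R.pos_combo a ha)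
  intro x hx hnx
  have h1 := key x (hle hx)
  have h2 := key (-x) (hle hnx)
  have hl0 : l x = 0 := le_antisymm (by have := h2.1; simpa using this) h1.1
  exact h1.2 hl0

lemma int_smul_mem {S : AddSubmonoid (EV n)} {y : EV n} (hy : y ∈ S)
    {m : ℤ} (hm : 0 ≤ m) : (m : ℝ) • y ∈ S := by
  lift m to ℕ using hm
  rw [Int.cast_natCast, Nat.cast_smul_eq_nsmul]
  exact AddSubmonoid.nsmul_mem S hy m

lemma cartan {a b : EV n} (ha : a ∈ R.Φ) (hb : b ∈ R.Φ) :
    ∃ m : ℤ, sRefl a b = b - (m : ℝ) • a := by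
  obtain ⟨m, hm⟩ := R.cartan_int a ha b hb
  exact ⟨m, by rw [sRefl_apply', hm]⟩

end BasedRootSystem
namespace BasedRootSystem
variable {n : ℕ} (R : BasedRootSystem n)

lemma ap_inv_eq {α : EV n} {v w : R.Weyl}
    (hvw : (v : EV n ≃ₗᵢ[ℝ] EV n) = sRefl α * (w : EV n ≃ₗᵢ[ℝ] EV n)) (b : EV n) :
    R.ap v⁻¹ b = R.ap w⁻¹ (sRefl α b) := by
  show ((v⁻¹ : R.Weyl) : EV n ≃ₗᵢ[ℝ] EV n) b = ((w⁻¹ : R.Weyl) : EV n ≃ₗᵢ[ℝ] EV n) (sRefl α b)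
  rw [InvMemClass.coe_inv, InvMemClass.coe_inv, hvw, mul_inv_rev, sRefl_inv]
  simp [LinearIsometryEquiv.coe_mul]

lemma ap_mem_phi (u : R.Weyl) {b : EV n} (hb : b ∈ R.Φ) : R.ap u b ∈ R.Φ :=
  (R.weyl_iff _ u.2 b).1 hb

/-- if `b ∈ Φ⁺` is not an inversion of `w` then `w⁻¹ b` is positive -/
lemma not_inv_pos {w : R.Weyl} {b : EV n} (hb : b ∈ R.pos) (hnb : b ∉ R.N w) :
    R.ap w⁻¹ b ∈ R.pos := by
  have hΦ : R.ap w⁻¹ b ∈ R.Φ := R.ap_mem_phi w⁻¹ (R.pos_sub hb)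
  rcases R.pos_or_neg hΦ with h | h
  · exact h
  · exact absurd ⟨hb, h⟩ hnb

end BasedRootSystem
namespace BasedRootSystem
variable {n : ℕ} (R : BasedRootSystem n)

lemma cartan_pos {α b : EV n} (hα : α ∈ R.pos) (hb : b ∈ R.pos)
    (hbneg : sRefl α b ∈ -R.pos) :
    ∃ m : ℤ, 1 ≤ m ∧ b + -(sRefl α b) = (m : ℝ) • α := by
  have hαΦ := R.pos_sub hα
  have hbΦ := R.pos_sub hb
  obtain ⟨m, hm⟩ := R.cartan hαΦ hbΦ
  have hσpos : -(sRefl α b) ∈ R.pos := Set.mem_neg.1 hbneg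
  have hsum : b + -(sRefl α b) = (m : ℝ) • α := by rw [hm]; abel
  refine ⟨m, ?_, hsum⟩
  by_contra hmle
  push_neg at hmle
  have hx : b + -(sRefl α b) ∈ AddSubmonoid.closure R.pos :=
    add_mem (AddSubmonoid.subset_closure hb) (AddSubmonoid.subset_closure hσpos)
  have hnx : -(b + -(sRefl α b)) ∈ AddSubmonoid.closure R.pos := by
    have he : -(b + -(sRefl α b)) = ((-m : ℤ) : ℝ) • α := by
      rw [hsum]; push_cast; rw [neg_smul]
    rw [he]
    exact int_smul_mem (AddSubmonoid.subset_closure hα) (by omega)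
  have h0 := R.no_neg_sum _ hx hnx
  rw [add_eq_zero_iff_eq_neg] at h0
  exact R.not_both hb (by rw [h0]; exact Set.neg_mem_neg.2 hσpos)

lemma cover_pairing {α : EV n} (hα : α ∈ R.pos) {v w : R.Weyl}
    (hvw : (v : EV n ≃ₗᵢ[ℝ] EV n) = sRefl α * (w : EV n ≃ₗᵢ[ℝ] EV n))
    (hlen : R.len v = R.len w + 1) :
    R.ap w⁻¹ α ∈ R.pos ∧
      ∀ b ∈ R.pos, b ≠ α → sRefl α b ∈ -R.pos → b ∉ R.N w → -(sRefl α b) ∈ R.N w := by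
  classical
  have hαΦ : α ∈ R.Φ := R.pos_sub hα
  set σ : EV n → EV n := fun b => -(sRefl α b) with hσ
  have hσσ : ∀ b, σ (σ b) = b := by
    intro b; simp only [hσ, map_neg, neg_neg, sRefl_sRefl]
  have hσinj : Function.Injective σ :=
    Function.LeftInverse.injective hσσ
  set A : Set (EV n) := {b | b ∈ R.pos ∧ b ≠ α ∧ sRefl α b ∈ -R.pos} with hAdef
  set B : Set (EV n) := {b | b ∈ R.pos ∧ b ≠ α ∧ sRefl α b ∈ R.pos} with hBdef
  have hposfin := R.pos_finite
  have hA_pos : A ⊆ R.pos := fun b hb => hb.1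
  have hB_pos : B ⊆ R.pos := fun b hb => hb.1
  have hNw_pos : R.N w ⊆ R.pos := fun b hb => hb.1
  have hNv_pos : R.N v ⊆ R.pos := fun b hb => hb.1
  have hAfin : A.Finite := hposfin.subset hA_pos
  have hNwfin : (R.N w).Finite := hposfin.subset hNw_pos
  -- σ maps A to A
  have hσA : ∀ b ∈ A, σ b ∈ A := by
    intro b hb
    obtain ⟨hb1, hb2, hb3⟩ := hb
    refine ⟨by rwa [Set.mem_neg] at hb3, ?_, ?_⟩
    · intro hcontra
      have : sRefl α b = -α := by
        have h1 : sRefl α b = -σ b := (neg_neg _).symm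
        rw [h1, hcontra]
      have hb' : b = α := by
        have := congrArg (sRefl α) this
        rwa [sRefl_sRefl, map_neg, sRefl_self, neg_neg] at this
      exact hb2 hb'
    · show sRefl α (σ b) ∈ -R.pos
      have : sRefl α (σ b) = -b := by simp [hσ, map_neg, sRefl_sRefl]
      rw [this, Set.mem_neg, neg_neg]; exact hb1
  -- cartan sum
  have hsumA : ∀ b ∈ A, ∃ m : ℤ, 1 ≤ m ∧ b + σ b = (m : ℝ) • α := by
    intro b hb
    obtain ⟨m, h1, h2⟩ := R.cartan_pos hα hb.1 hb.2.2
    exact ⟨m, h1, h2⟩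
  -- absurdity helper
  have habs : ∀ x y z : EV n, x ∈ R.pos → y ∈ R.pos → z ∈ R.pos →
      ∀ m : ℤ, 1 ≤ m → x + y + (m : ℝ) • z = 0 → False := by
    intro x y z hx hy hz m hm heq
    have hzc : (m : ℝ) • z ∈ AddSubmonoid.closure R.pos :=
      int_smul_mem (AddSubmonoid.subset_closure hz) (by omega)
    have hnzc : -((m : ℝ) • z) ∈ AddSubmonoid.closure R.pos := by
      have h2 : x + y = -((m : ℝ) • z) := by
        rw [eq_neg_iff_add_eq_zero]; exact heq
      rw [← h2]
      exact add_mem (AddSubmonoid.subset_closure hx) (AddSubmonoid.subset_closure hy)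
    have h0 := R.no_neg_sum _ hzc hnzc
    rcases smul_eq_zero.1 h0 with h | h
    · have : (m : ℝ) ≠ 0 := by exact_mod_cast (by omega : m ≠ 0)
      exact this h
    · exact R.pos_ne_zero hz h
  -- transported sum
  have hsumw : ∀ b ∈ A, ∃ m : ℤ, 1 ≤ m ∧
      R.ap w⁻¹ b + R.ap w⁻¹ (σ b) = (m : ℝ) • R.ap w⁻¹ α := by
    intro b hb
    obtain ⟨m, hm1, hm2⟩ := hsumA b hb
    refine ⟨m, hm1, ?_⟩
    show ((w⁻¹ : R.Weyl) : EV n ≃ₗᵢ[ℝ] EV n) b + ((w⁻¹ : R.Weyl) : EV n ≃ₗᵢ[ℝ] EV n) (σ b)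
        = (m : ℝ) • ((w⁻¹ : R.Weyl) : EV n ≃ₗᵢ[ℝ] EV n) α
    rw [← map_add, hm2, map_smul]
  -- both-in-Nw impossible when w⁻¹α positive
  have hnot2 : R.ap w⁻¹ α ∈ R.pos → ∀ b ∈ A, b ∈ R.N w → σ b ∈ R.N w → False := by
    intro hwα b hb hb1 hb2
    obtain ⟨m, hm1, hm2⟩ := hsumw b hb
    refine habs (-(R.ap w⁻¹ b)) (-(R.ap w⁻¹ (σ b))) (R.ap w⁻¹ α) ?_ ?_ hwα m hm1 ?_
    · exact Set.mem_neg.1 hb1.2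
    · exact Set.mem_neg.1 hb2.2
    · rw [← neg_add, hm2]; exact neg_add_cancel _
  -- both-out impossible when w⁻¹α negative
  have hnot0 : R.ap w⁻¹ α ∈ -R.pos → ∀ b ∈ A, b ∉ R.N w → σ b ∉ R.N w → False := by
    intro hwα b hb hb1 hb2
    obtain ⟨m, hm1, hm2⟩ := hsumw b hb
    refine habs (R.ap w⁻¹ b) (R.ap w⁻¹ (σ b)) (-(R.ap w⁻¹ α)) (R.not_inv_pos hb.1 hb1)
      (R.not_inv_pos (hσA b hb).1 hb2) (Set.mem_neg.1 hwα) m hm1 ?_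
    rw [smul_neg, hm2]
    exact add_neg_cancel _
  have hNv_iff : ∀ b, b ∈ R.pos → (b ∈ R.N v ↔ R.ap w⁻¹ (sRefl α b) ∈ -R.pos) := by
    intro b hb
    constructor
    · intro h'
      have := h'.2
      rwa [R.ap_inv_eq hvw] at this
    · intro h'
      exact ⟨hb, by rwa [R.ap_inv_eq hvw]⟩
  have hapneg : ∀ b, R.ap w⁻¹ (sRefl α b) = -(R.ap w⁻¹ (σ b)) := by
    intro b
    show ((w⁻¹ : R.Weyl) : EV n ≃ₗᵢ[ℝ] EV n) _ = -(((w⁻¹ : R.Weyl) : EV n ≃ₗᵢ[ℝ] EV n) _)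
    rw [← map_neg]
    congr 1
    show sRefl α b = -σ b
    rw [hσ]
    simp
  have hf3 : ∀ b ∈ A, (b ∈ R.N v ↔ σ b ∉ R.N w) := by
    intro b hb
    have hσb := hσA b hb
    rw [hNv_iff b hb.1, hapneg b]
    constructor
    · intro h' hc
      have h1 : R.ap w⁻¹ (σ b) ∈ R.pos := by
        have := Set.mem_neg.1 h'
        rwa [neg_neg] at this
      exact R.not_both h1 hc.2
    · intro h'
      have h1 : R.ap w⁻¹ (σ b) ∈ R.pos := R.not_inv_pos hσb.1 h'
      rw [Set.mem_neg, neg_neg]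
      exact h1
  have hαNv : α ∈ R.N v ↔ α ∉ R.N w := by
    have hmap : R.ap w⁻¹ (-α) = -(R.ap w⁻¹ α) :=
      map_neg ((w⁻¹ : R.Weyl) : EV n ≃ₗᵢ[ℝ] EV n) α
    rw [hNv_iff α hα, sRefl_self, hmap]
    constructor
    · intro h' hc
      have h1 : R.ap w⁻¹ α ∈ R.pos := by
        have := Set.mem_neg.1 h'
        rwa [neg_neg] at this
      exact R.not_both h1 hc.2
    · intro h'
      have h1 := R.not_inv_pos hα h'
      rw [Set.mem_neg, neg_neg]
      exact h1
  -- counting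
  have hsplit : ∀ S : Set (EV n), S ⊆ R.pos →
      S.ncard = (S ∩ A).ncard + (S ∩ B).ncard + (S ∩ {α}).ncard := by
    intro S hS
    have hSfin := hposfin.subset hS
    have hcover : S = (S ∩ A ∪ S ∩ B) ∪ S ∩ {α} := by
      ext x
      constructor
      · intro hx
        have hxp := hS hx
        by_cases hxα : x = α
        · exact Or.inr ⟨hx, by simp [hxα]⟩
        · have hsx : sRefl α x ∈ R.Φ := R.reflect_mem α hαΦ x (R.pos_sub hxp)
          rcases R.pos_or_neg hsx with h' | h'
          · exact Or.inl (Or.inr ⟨hx, hxp, hxα, h'⟩)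
          · exact Or.inl (Or.inl ⟨hx, hxp, hxα, h'⟩)
      · rintro ((h' | h') | h') <;> exact h'.1
    have hd1 : Disjoint (S ∩ A) (S ∩ B) := by
      rw [Set.disjoint_left]
      rintro x ⟨-, hxA⟩ ⟨-, hxB⟩
      exact R.not_both hxB.2.2 hxA.2.2
    have hd2 : Disjoint (S ∩ A ∪ S ∩ B) (S ∩ {α}) := by
      rw [Set.disjoint_left]
      rintro x (⟨-, hxA⟩ | ⟨-, hxB⟩) ⟨-, hxα⟩
      · exact hxA.2.1 hxα
      · exact hxB.2.1 hxα
    have e1 : S.ncard = ((S ∩ A ∪ S ∩ B) ∪ S ∩ {α}).ncard := by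
      conv_lhs => rw [hcover]
    rw [e1, Set.ncard_union_eq hd2 ((hSfin.inter_of_left A).union (hSfin.inter_of_left B))
      (hSfin.inter_of_left {α}),
      Set.ncard_union_eq hd1 (hSfin.inter_of_left A) (hSfin.inter_of_left B)]
  have hNwsplit := hsplit (R.N w) hNw_pos
  have hNvsplit := hsplit (R.N v) hNv_pos
  have himgB : sRefl α '' (R.N v ∩ B) = R.N w ∩ B := by
    ext x
    constructor
    · rintro ⟨b, ⟨hbNv, hbB⟩, rfl⟩
      have hb' : sRefl α b ∈ R.pos := hbB.2.2
      have h1 : R.ap w⁻¹ (sRefl α b) ∈ -R.pos := (hNv_iff b hbB.1).1 hbNv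
      refine ⟨⟨hb', h1⟩, hb', ?_, ?_⟩
      · intro hc
        have hb2 : b = -α := by rw [← sRefl_sRefl α b, hc, sRefl_self]
        exact R.not_both hbB.1 (by rw [hb2]; exact Set.neg_mem_neg.2 hα)
      · rw [sRefl_sRefl]
        exact hbB.1
    · rintro ⟨hxNw, hxB⟩
      have hne : sRefl α x ≠ α := by
        intro hc
        have hx2 : x = -α := by rw [← sRefl_sRefl α x, hc, sRefl_self]
        exact R.not_both hxB.1 (by rw [hx2]; exact Set.neg_mem_neg.2 hα)
      refine ⟨sRefl α x, ⟨?_, ?_⟩, sRefl_sRefl α x⟩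
      · rw [hNv_iff _ hxB.2.2, sRefl_sRefl]
        exact hxNw.2
      · exact ⟨hxB.2.2, hne, by rw [sRefl_sRefl]; exact hxB.1⟩
  have hBcount : (R.N v ∩ B).ncard = (R.N w ∩ B).ncard := by
    rw [← himgB, Set.ncard_image_of_injective _ (sRefl α).injective]
  have himgA : σ '' (R.N v ∩ A) = A \ R.N w := by
    ext x
    constructor
    · rintro ⟨b, ⟨hbNv, hbA⟩, rfl⟩
      exact ⟨hσA b hbA, (hf3 b hbA).1 hbNv⟩
    · rintro ⟨hxA, hxNw⟩
      refine ⟨σ x, ⟨?_, hσA x hxA⟩, hσσ x⟩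
      rw [hf3 (σ x) (hσA x hxA), hσσ x]
      exact hxNw
  have hAcount : (R.N v ∩ A).ncard = (A \ R.N w).ncard := by
    rw [← himgA, Set.ncard_image_of_injective _ hσinj]
  have hAadd : (A \ R.N w).ncard + (R.N w ∩ A).ncard = A.ncard := by
    have hsub : R.N w ∩ A ⊆ A := Set.inter_subset_right
    have h2 := Set.ncard_diff_add_ncard_of_subset hsub hAfin
    rwa [Set.diff_inter_self_eq_diff] at h2
  have hlen' : (R.N v).ncard = (R.N w).ncard + 1 := hlen
  by_cases hαw : α ∈ R.N w
  · exfalso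
    have hNvα : (R.N v ∩ {α}).ncard = 0 := by
      have he : R.N v ∩ {α} = ∅ := by
        ext x
        simp only [Set.mem_inter_iff, Set.mem_singleton_iff, Set.mem_empty_iff_false, iff_false,
          not_and]
        rintro hx rfl
        exact (hαNv.1 hx) hαw
      rw [he, Set.ncard_empty]
    have hNwα : (R.N w ∩ {α}).ncard = 1 := by
      have he : R.N w ∩ {α} = {α} :=
        Set.inter_eq_self_of_subset_right (by simpa using hαw)
      rw [he, Set.ncard_singleton]
    have himg2 : σ '' (A \ R.N w) ⊆ R.N w ∩ A := by
      rintro x ⟨b, ⟨hbA, hbNw⟩, rfl⟩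
      refine ⟨?_, hσA b hbA⟩
      by_contra hc
      exact hnot0 hαw.2 b hbA hbNw hc
    have hle : (A \ R.N w).ncard ≤ (R.N w ∩ A).ncard := by
      rw [← Set.ncard_image_of_injective (A \ R.N w) hσinj]
      exact Set.ncard_le_ncard himg2 (hNwfin.inter_of_left A)
    omega
  · have hwα : R.ap w⁻¹ α ∈ R.pos := R.not_inv_pos hα hαw
    have hNvα : (R.N v ∩ {α}).ncard = 1 := by
      have he : R.N v ∩ {α} = {α} :=
        Set.inter_eq_self_of_subset_right (by simpa using hαNv.2 hαw)
      rw [he, Set.ncard_singleton]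
    have hNwα : (R.N w ∩ {α}).ncard = 0 := by
      have he : R.N w ∩ {α} = ∅ := by
        ext x
        simp only [Set.mem_inter_iff, Set.mem_singleton_iff, Set.mem_empty_iff_false, iff_false,
          not_and]
        rintro hx rfl
        exact hαw hx
      rw [he, Set.ncard_empty]
    have himg2 : σ '' (R.N w ∩ A) ⊆ A \ R.N w := by
      rintro x ⟨b, ⟨hbNw, hbA⟩, rfl⟩
      refine ⟨hσA b hbA, ?_⟩
      by_contra hc
      exact hnot2 hwα b hbA hbNw hc
    have heq : σ '' (R.N w ∩ A) = A \ R.N w := by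
      refine Set.eq_of_subset_of_ncard_le himg2 ?_ hAfin.diff
      rw [Set.ncard_image_of_injective _ hσinj]
      omega
    refine ⟨hwα, ?_⟩
    intro b hb hbne hbneg hbNw
    have hbA : b ∈ A := ⟨hb, hbne, hbneg⟩
    have hbm : b ∈ σ '' (R.N w ∩ A) := heq ▸ (⟨hbA, hbNw⟩ : b ∈ A \ R.N w)
    obtain ⟨c, hc, hcb⟩ := hbm
    have hσb : σ b = c := by rw [← hcb, hσσ]
    show -(sRefl α b) ∈ R.N w
    have hfin : -(sRefl α b) = σ b := rfl
    rw [hfin, hσb]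
    exact hc.1


end BasedRootSystem
open BasedRootSystem in
/-- If `v` covers `w`, then `|N_v| - |Φ⁺ \ 𝔥| ≤ |N_v^𝔥| ≤ |N_w^𝔥| + 1`. -/
theorem lenh_cover_bounds {n : ℕ} (R : BasedRootSystem n) (h : Set (EV n))
    (hh : R.IsHess h) (v w : R.Weyl) (hcov : R.Covers v w) :
    R.len v - (R.pos \ h).ncard ≤ R.lenh h v ∧ R.lenh h v ≤ R.lenh h w + 1 := by
  classical
  obtain ⟨α, hα, hvw, hlen⟩ := hcov
  obtain ⟨hwα, hpair⟩ := R.cover_pairing hα hvw hlen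
  have hposfin := R.pos_finite
  have hαΦ : α ∈ R.Φ := R.pos_sub hα
  constructor
  · -- first inequality
    rw [tsub_le_iff_right]
    show (R.N v).ncard ≤ (R.Nh h v).ncard + (R.pos \ h).ncard
    have hNv_pos : R.N v ⊆ R.pos := fun b hb => hb.1
    have hNh_sub : R.Nh h v ⊆ R.N v := by
      intro b hb
      exact ⟨hb.1, Set.mem_neg.2 (hh.1 (Set.mem_neg.1 hb.2))⟩
    have hNvfin := hposfin.subset hNv_pos
    have c1 : (R.N v).ncard ≤ (R.Nh h v).ncard + (R.N v \ R.Nh h v).ncard := by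
      have hcover : R.N v = R.Nh h v ∪ (R.N v \ R.Nh h v) :=
        (Set.union_diff_cancel hNh_sub).symm
      conv_lhs => rw [hcover]
      exact Set.ncard_union_le _ _
    have c2 : (R.N v \ R.Nh h v).ncard ≤ (R.pos \ h).ncard := by
      refine Set.ncard_le_ncard_of_injOn (fun b => -(R.ap v⁻¹ b)) ?_ ?_ hposfin.diff
      · rintro b ⟨hbN, hbNh⟩
        refine ⟨Set.mem_neg.1 hbN.2, ?_⟩
        intro hc
        exact hbNh ⟨hbN.1, Set.mem_neg.2 hc⟩
      · intro x hx y hy hxy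
        have h1 : R.ap v⁻¹ x = R.ap v⁻¹ y := neg_injective hxy
        exact ((v⁻¹ : R.Weyl) : EV n ≃ₗᵢ[ℝ] EV n).injective h1
    omega
  · -- second inequality
    have hNhw_fin : (R.Nh h w).Finite := hposfin.subset (fun b hb => hb.1)
    have hkey : (R.Nh h v).ncard ≤ (insert α (R.Nh h w)).ncard := by
      refine Set.ncard_le_ncard_of_injOn
        (fun b => if b = α ∨ sRefl α b ∈ -R.pos then b else sRefl α b) ?_ ?_
        (hNhw_fin.insert α)
      · rintro b ⟨hb, hbv⟩
        by_cases hbα : b = α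
        · rw [if_pos (Or.inl hbα), hbα]
          exact Set.mem_insert _ _
        · by_cases hbneg : sRefl α b ∈ -R.pos
          · rw [if_pos (Or.inr hbneg)]
            -- the ideal argument
            have hμ : R.ap v⁻¹ b = -(R.ap w⁻¹ (-(sRefl α b))) := by
              rw [R.ap_inv_eq hvw]
              have : R.ap w⁻¹ (-(-(sRefl α b))) = -(R.ap w⁻¹ (-(sRefl α b))) :=
                map_neg ((w⁻¹ : R.Weyl) : EV n ≃ₗᵢ[ℝ] EV n) _
              rw [← this, neg_neg]
            have hμh : R.ap w⁻¹ (-(sRefl α b)) ∈ h := by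
              have h1 : -(R.ap w⁻¹ (-(sRefl α b))) ∈ -h := hμ ▸ hbv
              have := Set.mem_neg.1 h1
              rwa [neg_neg] at this
            have hμpos : R.ap w⁻¹ (-(sRefl α b)) ∈ R.pos := hh.1 hμh
            have hσpos : -(sRefl α b) ∈ R.pos := Set.mem_neg.1 hbneg
            have hσNw : -(sRefl α b) ∉ R.N w := fun hc => R.not_both hμpos hc.2
            have hσα : -(sRefl α b) ≠ α := by
              intro hc
              have : sRefl α b = -α := by rw [← neg_neg (sRefl α b), hc]
              have hb2 : b = α := by
                have h2 := congrArg (sRefl α) this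
                rwa [sRefl_sRefl, map_neg, sRefl_self, neg_neg] at h2
              exact hbα hb2
            have hσneg : sRefl α (-(sRefl α b)) ∈ -R.pos := by
              rw [map_neg, sRefl_sRefl, Set.mem_neg, neg_neg]
              exact hb
            have hbNw : b ∈ R.N w := by
              have := hpair (-(sRefl α b)) hσpos hσα hσneg hσNw
              rwa [map_neg, sRefl_sRefl, neg_neg] at this
            -- ideal upward closedness
            obtain ⟨m, hm1, hm2⟩ := R.cartan_pos hα hb hbneg
            have hlin : R.ap w⁻¹ b + R.ap w⁻¹ (-(sRefl α b)) = (m : ℝ) • R.ap w⁻¹ α := by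
              show ((w⁻¹ : R.Weyl) : EV n ≃ₗᵢ[ℝ] EV n) b
                  + ((w⁻¹ : R.Weyl) : EV n ≃ₗᵢ[ℝ] EV n) (-(sRefl α b))
                  = (m : ℝ) • ((w⁻¹ : R.Weyl) : EV n ≃ₗᵢ[ℝ] EV n) α
              rw [← map_add, hm2, map_smul]
            have hν : -(R.ap w⁻¹ b) ∈ R.pos := Set.mem_neg.1 hbNw.2
            have hdiff : R.ap w⁻¹ (-(sRefl α b)) - -(R.ap w⁻¹ b) = (m : ℝ) • R.ap w⁻¹ α := by
              rw [← hlin]; abel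
            have hprec : R.prec (-(R.ap w⁻¹ b)) (R.ap w⁻¹ (-(sRefl α b))) := by
              constructor
              · intro hc
                have h0 : (m : ℝ) • R.ap w⁻¹ α = 0 := by rw [← hdiff, ← hc, sub_self]
                rcases smul_eq_zero.1 h0 with h' | h'
                · exact (by exact_mod_cast (by omega : m ≠ 0) : (m : ℝ) ≠ 0) h'
                · exact R.pos_ne_zero hwα h'
              · rw [hdiff]
                exact int_smul_mem (AddSubmonoid.subset_closure hwα) (by omega)
            have hνh : -(R.ap w⁻¹ b) ∈ h := by
              by_contra hc
              have hmem : -(R.ap w⁻¹ b) ∈ R.pos \ h := ⟨hν, hc⟩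
              have := hh.2.2 _ hmem _ hμpos hprec
              exact this.2 hμh
            refine Set.mem_insert_of_mem _ ⟨hb, ?_⟩
            rw [Set.mem_neg]
            exact hνh
          · rw [if_neg (by push_neg; exact ⟨hbα, hbneg⟩)]
            have hsx : sRefl α b ∈ R.Φ := R.reflect_mem α hαΦ b (R.pos_sub hb)
            have hsxpos : sRefl α b ∈ R.pos := by
              rcases R.pos_or_neg hsx with h' | h'
              · exact h'
              · exact absurd h' hbneg
            refine Set.mem_insert_of_mem _ ⟨hsxpos, ?_⟩
            rw [← R.ap_inv_eq hvw]
            exact hbv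
      · -- injectivity
        intro x hx y hy hxy
        dsimp only at hxy
        by_cases hcx : x = α ∨ sRefl α x ∈ -R.pos <;>
          by_cases hcy : y = α ∨ sRefl α y ∈ -R.pos
        · rwa [if_pos hcx, if_pos hcy] at hxy
        · rw [if_pos hcx, if_neg hcy] at hxy
          exfalso
          rcases hcx with hcx | hcx
          · have hy2 : y = -α := by
              rw [← sRefl_sRefl α y, ← hxy, hcx, sRefl_self]
            exact R.not_both hy.1 (by rw [hy2]; exact Set.neg_mem_neg.2 hα)
          · rw [hxy] at hcx
            rw [sRefl_sRefl] at hcx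
            exact R.not_both hy.1 hcx
        · rw [if_neg hcx, if_pos hcy] at hxy
          exfalso
          rcases hcy with hcy | hcy
          · have hx2 : x = -α := by
              rw [← sRefl_sRefl α x, hxy, hcy, sRefl_self]
            exact R.not_both hx.1 (by rw [hx2]; exact Set.neg_mem_neg.2 hα)
          · rw [← hxy] at hcy
            rw [sRefl_sRefl] at hcy
            exact R.not_both hx.1 hcy
        · rw [if_neg hcx, if_neg hcy] at hxy
          exact (sRefl α).injective hxy
    calc R.lenh h v ≤ (insert α (R.Nh h w)).ncard := hkey
      _ ≤ R.lenh h w + 1 := Set.ncard_insert_le α _
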